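/- For all k ≥ 0 and b ≥ 1, the Toads and Frogs position □ T^k F □ T F^b satisfies □ T^k F □ T F^b ≤ 0. -/

import Mathlib

universe u

namespace SetTheory

/-- Pre-games, as in Mathlib's former `SetTheory.PGame` (removed from Mathlib). -/
inductive PGame : Type (u + 1)
  | mk : ∀ α β : Type u, (α → PGame) → (β → PGame) → PGame

namespace PGame

instance : Zero PGame := ⟨mk PEmpty PEmpty PEmpty.elim PEmpty.elim⟩

/-- Negation of a pre-game, as in former Mathlib. -/
def neg : PGame → PGame
  | mk l r L R => mk r l (fun i => neg (R i)) (fun i => neg (L i))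

instance : Neg PGame := ⟨neg⟩

/-- The pair `(x ≤ y, x ⧏ y)`, characterized as in former Mathlib by
`x ≤ y ↔ (∀ i, xL i ⧏ y) ∧ ∀ j, x ⧏ yR j` and
`x ⧏ y ↔ (∃ i, x ≤ yL i) ∨ ∃ j, xR j ≤ y`. -/
noncomputable def leLF (x : PGame) : PGame → Prop × Prop :=
  PGame.rec (motive := fun _ => PGame → Prop × Prop)
    (fun _ _ _ _ ihxL ihxR y =>
      PGame.rec (motive := fun _ => Prop × Prop)
        (fun _ _ yL yR ihyL ihyR =>
          ((∀ i, (ihxL i (mk _ _ yL yR)).2) ∧ ∀ j, (ihyR j).2,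
           (∃ i, (ihyL i).1) ∨ ∃ j, (ihxR j (mk _ _ yL yR)).1)) y) x

noncomputable instance : LE PGame := ⟨fun x y => (leLF x y).1⟩

end PGame

end SetTheory

open SetTheory

inductive Cell : Type
  | T | F | E
deriving DecidableEq

/-- Positions reachable from `l` by a single Toad (Left) move:
a Toad steps right into an empty square, or jumps over one adjacent Frog
into the empty square beyond. -/
def toadMoves : List Cell → List (List Cell)
  | [] => []
  | c :: rest =>
    (match c, rest with
     | Cell.T, Cell.E :: r => [Cell.E :: Cell.T :: r]
     | Cell.T, Cell.F :: Cell.E :: r => [Cell.E :: Cell.F :: Cell.T :: r]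
     | _, _ => []) ++ (toadMoves rest).map (c :: ·)

/-- Positions reachable from `l` by a single Frog (Right) move. -/
def frogMoves : List Cell → List (List Cell)
  | [] => []
  | c :: rest =>
    (match c, rest with
     | Cell.E, Cell.F :: r => [Cell.F :: Cell.E :: r]
     | Cell.E, Cell.T :: Cell.F :: r => [Cell.F :: Cell.T :: Cell.E :: r]
     | _, _ => []) ++ (frogMoves rest).map (c :: ·)

/-- A weight which strictly decreases with every legal move: each Toad
contributes the number of squares strictly to its right, each Frog the number
of squares strictly to its left. -/
def wt : List Cell → ℕ
  | [] => 0
  | c :: rest =>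
    (if c = Cell.T then rest.length else 0) + rest.countP (· = Cell.F) + wt rest

/-- Game tree with fuel; since `wt` strictly decreases along moves and
positions of weight `0` have no moves, `gameAux n l` is the true game
tree of `l` whenever `wt l ≤ n`. -/
def gameAux : ℕ → List Cell → PGame
  | 0, _ => 0
  | n + 1, l =>
    PGame.mk {m // m ∈ toadMoves l} {m // m ∈ frogMoves l}
      (fun m => gameAux n m.1) (fun m => gameAux n m.1)

/-- The game (PGame) associated to a Toads and Frogs position. -/
def tfGame (l : List Cell) : PGame := gameAux (wt l + 1) l

/-- The game `{x | y}` with a single Left option `x` and single Right option `y`. -/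
def gmk (x y : PGame) : PGame :=
  PGame.mk PUnit PUnit (fun _ => x) (fun _ => y)

/-- The canonical game of a natural number. -/
def natGame : ℕ → PGame
  | 0 => 0
  | n + 1 => PGame.mk PUnit PEmpty (fun _ => natGame n) (fun x => x.elim)

/-- The canonical game of an integer. -/
def intGame : ℤ → PGame
  | Int.ofNat n => natGame n
  | Int.negSucc n => -natGame (n + 1)

/-- `(TF)^b` : the block `TF` repeated `b` times. -/
def tfBlock (b : ℕ) : List Cell := (List.replicate b [Cell.T, Cell.F]).flatten

open Cell List

lemma tm_nil : toadMoves [] = [] := rfl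
lemma tm_E (l) : toadMoves (E :: l) = (toadMoves l).map (E :: ·) := rfl
lemma tm_F (l) : toadMoves (F :: l) = (toadMoves l).map (F :: ·) := rfl
lemma tm_Tnil : toadMoves [T] = [] := rfl
lemma tm_TT (l) : toadMoves (T::T::l) = (toadMoves (T::l)).map (T :: ·) := rfl
lemma tm_TE (l) : toadMoves (T::E::l) = (E::T::l) :: (toadMoves (E::l)).map (T :: ·) := rfl
lemma tm_TFnil : toadMoves [T,F] = [] := rfl
lemma tm_TFT (l) : toadMoves (T::F::T::l) = (toadMoves (F::T::l)).map (T :: ·) := rfl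
lemma tm_TFF (l) : toadMoves (T::F::F::l) = (toadMoves (F::F::l)).map (T :: ·) := rfl
lemma tm_TFE (l) : toadMoves (T::F::E::l) = (E::F::T::l) :: (toadMoves (F::E::l)).map (T :: ·) := rfl

lemma fm_nil : frogMoves [] = [] := rfl
lemma fm_T (l) : frogMoves (T :: l) = (frogMoves l).map (T :: ·) := rfl
lemma fm_F (l) : frogMoves (F :: l) = (frogMoves l).map (F :: ·) := rfl
lemma fm_Enil : frogMoves [E] = [] := rfl
lemma fm_EE (l) : frogMoves (E::E::l) = (frogMoves (E::l)).map (E :: ·) := rfl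
lemma fm_EF (l) : frogMoves (E::F::l) = (F::E::l) :: (frogMoves (F::l)).map (E :: ·) := rfl
lemma fm_ETnil : frogMoves [E,T] = [] := rfl
lemma fm_ETT (l) : frogMoves (E::T::T::l) = (frogMoves (T::T::l)).map (E :: ·) := rfl
lemma fm_ETE (l) : frogMoves (E::T::E::l) = (frogMoves (T::E::l)).map (E :: ·) := rfl
lemma fm_ETF (l) : frogMoves (E::T::F::l) = (F::T::E::l) :: (frogMoves (T::F::l)).map (E :: ·) := rfl

lemma toad_spec : ∀ l m, m ∈ toadMoves l →
    m.length = l.length ∧ m.countP (· = Cell.F) = l.countP (· = Cell.F) ∧ wt m < wt l := by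
  intro l
  induction l with
  | nil => simp [toadMoves]
  | cons c rest ih =>
    intro m hm
    have tail : ∀ m', m' ∈ toadMoves rest → m = c :: m' →
        m.length = (c :: rest).length ∧
        m.countP (· = Cell.F) = (c :: rest).countP (· = Cell.F) ∧ wt m < wt (c :: rest) := by
      rintro m' hm' rfl
      obtain ⟨h1, h2, h3⟩ := ih m' hm'
      refine ⟨by simp [h1], by simp [List.countP_cons, h2], ?_⟩
      simp [wt, h1, h2] <;> omega
    rcases c with _|_|_ <;>
      rcases rest with _ | ⟨_|_|_, _ | ⟨_|_|_, r⟩⟩ <;>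
      first
      | (rw [tm_Tnil] at hm; exact hm.elim)
      | (rw [tm_TFnil] at hm; exact hm.elim)
      | ((first
            | (rw [tm_TT] at hm)
            | (rw [tm_TE] at hm)
            | (rw [tm_TFT] at hm)
            | (rw [tm_TFF] at hm)
            | (rw [tm_TFE] at hm)
            | (rw [tm_E] at hm)
            | (rw [tm_F] at hm));
         simp only [tm_nil, List.map_nil, List.mem_cons, List.mem_map,
           List.not_mem_nil, false_or, or_false] at hm;
         first
         | exact hm.elim
         | (subst hm;
            exact ⟨by simp, by simp [List.countP_cons], by simp [wt, List.countP_cons] <;> omega⟩)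
         | (obtain ⟨m', hm', rfl⟩ := hm; exact tail m' hm' rfl)
         | (rcases hm with rfl | ⟨m', hm', rfl⟩
            · exact ⟨by simp, by simp [List.countP_cons], by simp [wt, List.countP_cons] <;> omega⟩
            · exact tail m' hm' rfl))
      | (simp [toadMoves] at hm)

lemma frog_spec : ∀ l m, m ∈ frogMoves l →
    m.length = l.length ∧ m.countP (· = Cell.F) = l.countP (· = Cell.F) ∧ wt m < wt l := by
  intro l
  induction l with
  | nil => simp [frogMoves]
  | cons c rest ih =>
    intro m hm
    have tail : ∀ m', m' ∈ frogMoves rest → m = c :: m' →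
        m.length = (c :: rest).length ∧
        m.countP (· = Cell.F) = (c :: rest).countP (· = Cell.F) ∧ wt m < wt (c :: rest) := by
      rintro m' hm' rfl
      obtain ⟨h1, h2, h3⟩ := ih m' hm'
      refine ⟨by simp [h1], by simp [List.countP_cons, h2], ?_⟩
      simp [wt, h1, h2] <;> omega
    rcases c with _|_|_ <;>
      rcases rest with _ | ⟨_|_|_, _ | ⟨_|_|_, r⟩⟩ <;>
      first
      | (rw [fm_Enil] at hm; exact hm.elim)
      | (rw [fm_ETnil] at hm; exact hm.elim)
      | ((first
            | (rw [fm_EE] at hm)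
            | (rw [fm_EF] at hm)
            | (rw [fm_ETT] at hm)
            | (rw [fm_ETE] at hm)
            | (rw [fm_ETF] at hm)
            | (rw [fm_T] at hm)
            | (rw [fm_F] at hm));
         simp only [fm_nil, List.map_nil, List.mem_cons, List.mem_map,
           List.not_mem_nil, false_or, or_false] at hm;
         first
         | exact hm.elim
         | (subst hm;
            exact ⟨by simp, by simp [List.countP_cons], by simp [wt, List.countP_cons] <;> omega⟩)
         | (obtain ⟨m', hm', rfl⟩ := hm; exact tail m' hm' rfl)
         | (rcases hm with rfl | ⟨m', hm', rfl⟩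
            · exact ⟨by simp, by simp [List.countP_cons], by simp [wt, List.countP_cons] <;> omega⟩
            · exact tail m' hm' rfl))
      | (simp [frogMoves] at hm)

lemma toad_noE : ∀ l, Cell.E ∉ l → toadMoves l = [] := by
  intro l
  induction l with
  | nil => intro _; rfl
  | cons c rest ih =>
    intro h
    rw [List.mem_cons, not_or] at h
    obtain ⟨hc, hr⟩ := h
    have ht : toadMoves rest = [] := ih hr
    rcases c with _|_|_ <;>
      rcases rest with _ | ⟨_|_|_, _ | ⟨_|_|_, r⟩⟩ <;>
      simp_all [tm_nil, tm_E, tm_F, tm_Tnil, tm_TT, tm_TE, tm_TFnil, tm_TFT, tm_TFF, tm_TFE,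
        List.mem_cons]

lemma frog_noE : ∀ l, Cell.E ∉ l → frogMoves l = [] := by
  intro l
  induction l with
  | nil => intro _; rfl
  | cons c rest ih =>
    intro h
    rw [List.mem_cons, not_or] at h
    obtain ⟨hc, hr⟩ := h
    have ht : frogMoves rest = [] := ih hr
    rcases c with _|_|_ <;>
      rcases rest with _ | ⟨_|_|_, _ | ⟨_|_|_, r⟩⟩ <;>
      simp_all [fm_nil, fm_T, fm_F, fm_Enil, fm_EE, fm_EF, fm_ETnil, fm_ETT, fm_ETE, fm_ETF,
        List.mem_cons]

lemma toad_Tblock (s : List Cell) (hs : toadMoves s = []) :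
    ∀ k, toadMoves (List.replicate (k+1) T ++ F :: E :: s)
      = [List.replicate k T ++ E :: F :: T :: s] := by
  intro k
  induction k with
  | zero => simp [List.replicate, tm_TFE, tm_F, tm_E, hs]
  | succ k ih =>
    rw [show (List.replicate (k+2) T ++ F::E::s) = T :: T :: (List.replicate k T ++ F::E::s) by
      simp [List.replicate_succ]]
    rw [tm_TT]
    rw [show (T :: (List.replicate k T ++ F::E::s)) = List.replicate (k+1) T ++ F::E::s by
      simp [List.replicate_succ]]
    rw [ih]
    simp [List.replicate_succ]

lemma frog_Tblock (s : List Cell) (hs : frogMoves s = []) :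
    ∀ k, frogMoves (List.replicate k T ++ E :: F :: s)
      = [List.replicate k T ++ F :: E :: s] := by
  intro k
  induction k with
  | zero => simp [fm_EF, fm_F, hs]
  | succ k ih =>
    rw [show (List.replicate (k+1) T ++ E::F::s) = T :: (List.replicate k T ++ E::F::s) by
      simp [List.replicate_succ]]
    rw [fm_T, ih]
    simp [List.replicate_succ]

def pos (k t b : ℕ) : List Cell :=
  E :: (List.replicate k T ++ F :: E :: (List.replicate t T ++ List.replicate b F))

lemma noE_TF (t b : ℕ) : Cell.E ∉ (List.replicate t T ++ List.replicate b F) := by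
  simp [List.mem_append, List.mem_replicate]

lemma toad_pos0 (t b : ℕ) : toadMoves (pos 0 t b) = [] := by
  have hs := toad_noE _ (noE_TF t b)
  simp [pos, tm_E, tm_F, hs]

lemma toad_pos (k t b : ℕ) : toadMoves (pos (k+1) t b)
    = [E :: (List.replicate k T ++ E :: F :: (List.replicate (t+1) T ++ List.replicate b F))] := by
  have hs := toad_noE _ (noE_TF t b)
  rw [pos, tm_E, toad_Tblock _ hs k]
  simp [List.replicate_succ]

lemma frog_L1 (k t b : ℕ) :
    frogMoves (E :: (List.replicate k T ++ E :: F :: (List.replicate (t+1) T ++ List.replicate b F)))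
      = [pos k (t+1) b] := by
  have hs := frog_noE _ (noE_TF (t+1) b)
  have hblock := frog_Tblock _ hs
  rcases k with _|_|k
  · rw [show (E :: (List.replicate 0 T ++ E :: F :: (List.replicate (t+1) T ++ List.replicate b F)))
        = E :: E :: F :: (List.replicate (t+1) T ++ List.replicate b F) by simp]
    rw [fm_EE]
    have := hblock 0
    simp only [List.replicate, List.nil_append] at this
    rw [show (E :: F :: (List.replicate (t+1) T ++ List.replicate b F))
        = List.replicate 0 T ++ E :: F :: (List.replicate (t+1) T ++ List.replicate b F) by simp]
    rw [hblock 0]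
    simp [pos]
  · rw [show (E :: (List.replicate 1 T ++ E :: F :: (List.replicate (t+1) T ++ List.replicate b F)))
        = E :: T :: E :: F :: (List.replicate (t+1) T ++ List.replicate b F) by simp [List.replicate]]
    rw [fm_ETE]
    rw [show (T :: E :: F :: (List.replicate (t+1) T ++ List.replicate b F))
        = List.replicate 1 T ++ E :: F :: (List.replicate (t+1) T ++ List.replicate b F) by simp [List.replicate]]
    rw [hblock 1]
    simp [pos, List.replicate]
  · rw [show (E :: (List.replicate (k+2) T ++ E :: F :: (List.replicate (t+1) T ++ List.replicate b F)))
        = E :: T :: T :: (List.replicate k T ++ E :: F :: (List.replicate (t+1) T ++ List.replicate b F)) by simp [List.replicate_succ]]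
    rw [fm_ETT]
    rw [show (T :: T :: (List.replicate k T ++ E :: F :: (List.replicate (t+1) T ++ List.replicate b F)))
        = List.replicate (k+2) T ++ E :: F :: (List.replicate (t+1) T ++ List.replicate b F) by simp [List.replicate_succ]]
    rw [hblock (k+2)]
    simp [pos, List.replicate_succ]

lemma mk_le_zero' {α β : Type u} (L : α → PGame.{u}) (R : β → PGame.{u})
    (h : ∀ i, (PGame.leLF (L i) (0 : PGame.{u})).2) : PGame.mk α β L R ≤ 0 :=
  ⟨h, fun j => j.elim⟩

lemma lf_zero_of' {α β : Type u} (L : α → PGame.{u}) (R : β → PGame.{u}) (j : β)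
    (h : R j ≤ 0) : (PGame.leLF (PGame.mk α β L R) (0 : PGame.{u})).2 :=
  Or.inr ⟨j, h⟩

open PGame in
lemma main : ∀ n k t b, 1 ≤ b → wt (pos k t b) ≤ n → gameAux n (pos k t b) ≤ 0 := by
  intro n
  induction n using Nat.strong_induction_on with
  | _ n IH =>
    intro k t b hb hw
    rcases n with _|n
    · exact ⟨fun i => i.elim, fun j => j.elim⟩
    · rw [gameAux]
      apply mk_le_zero'
      rintro ⟨m, hm⟩
      rcases k with _|k
      · rw [toad_pos0] at hm
        exact absurd hm List.not_mem_nil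
      · rw [toad_pos] at hm
        rw [List.mem_singleton] at hm
        subst hm
        show (PGame.leLF (gameAux n _) (0 : PGame.{0})).2
        set L1 := E :: (List.replicate k T ++ E :: F :: (List.replicate (t+1) T ++ List.replicate b F)) with hL1
        have hmemL : L1 ∈ toadMoves (pos (k+1) t b) := by rw [toad_pos]; simp [L1]
        have hwL : wt L1 < wt (pos (k+1) t b) := (toad_spec _ _ hmemL).2.2
        have hfm : frogMoves L1 = [pos k (t+1) b] := frog_L1 k t b
        have hmemR : pos k (t+1) b ∈ frogMoves L1 := by rw [hfm]; simp
        have hwR : wt (pos k (t+1) b) < wt L1 := (frog_spec _ _ hmemR).2.2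
        obtain ⟨n', rfl⟩ : ∃ n', n = n' + 1 := ⟨n - 1, by omega⟩
        rw [gameAux]
        refine lf_zero_of' _ _ ⟨pos k (t+1) b, hmemR⟩ ?_
        show gameAux n' (pos k (t+1) b) ≤ 0
        exact IH n' (by omega) k (t+1) b hb (by omega)

/-- `□ T^k F □ T F^b ≤ 0` for all `k ≥ 0`, `b ≥ 1`. -/
theorem box_TkF_box_TFb_nonpos (k b : ℕ) (hb : 1 ≤ b) :
    tfGame ([Cell.E] ++ List.replicate k Cell.T ++ [Cell.F, Cell.E, Cell.T] ++
        List.replicate b Cell.F) ≤ 0 := by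
  have hl : ([Cell.E] ++ List.replicate k Cell.T ++ [Cell.F, Cell.E, Cell.T] ++
      List.replicate b Cell.F) = pos k 1 b := by
    simp [pos, List.replicate]
  rw [hl, tfGame]
  exact main _ k 1 b hb (Nat.le_succ _)
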